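/- arXiv:1909.12602 — 4 statements merged into one kernel-verified Lean document; each statement's English description precedes it below -/
import Mathlib

section
/- Let ω₁ and ω₂ be analytic functions mapping the unit disk D into its closure with |ω₁(z)| < 1 and |ω₂(z)| < 1 on D. Then for every real θ and all z ∈ D, Re[ (1 − ω₁(z) conj(ω₂(z))) / ((1 + e^{−2iθ} ω₁(z))(1 + e^{2iθ} conj(ω₂(z)))) ] > 0. -/
open Complex Metric

lemma aux_pos (u v : ℂ) (hu : ‖u‖ < 1) (hv : ‖v‖ < 1) :
    0 < ((1 - u * (starRingEnd ℂ) v) / ((1 + u) * (starRingEnd ℂ) (1 + v))).re := by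
  set r := ‖u‖ with hr
  set m := ‖v‖ with hm
  have hr0 : 0 ≤ r := norm_nonneg u
  have hm0 : 0 ≤ m := norm_nonneg v
  have hx : -r ≤ u.re := (abs_le.mp (Complex.abs_re_le_norm u)).1
  have hs : -m ≤ v.re := (abs_le.mp (Complex.abs_re_le_norm v)).1
  have hru : u.re * u.re + u.im * u.im = r * r := by
    have := Complex.sq_norm u
    rw [Complex.normSq_apply] at this; nlinarith [this]
  have hmv : v.re * v.re + v.im * v.im = m * m := by
    have := Complex.sq_norm v
    rw [Complex.normSq_apply] at this; nlinarith [this]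
  have hu1 : (1 + u) ≠ 0 := by
    intro h
    have h2 : u = -1 := by linear_combination h
    rw [hr, h2] at hu; simp at hu
  have hv1 : (1 + v) ≠ 0 := by
    intro h
    have h2 : v = -1 := by linear_combination h
    rw [hm, h2] at hv; simp at hv
  have hn : 0 < normSq ((1 + u) * (starRingEnd ℂ) (1 + v)) :=
    normSq_pos.mpr (mul_ne_zero hu1 ((map_ne_zero (starRingEnd ℂ)).mpr hv1))
  rw [Complex.div_re, ← add_div]
  apply div_pos _ hn
  simp only [Complex.mul_re, Complex.mul_im, Complex.sub_re, Complex.sub_im,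
    Complex.add_re, Complex.add_im, Complex.one_re, Complex.one_im, Complex.conj_re,
    Complex.conj_im]
  nlinarith [mul_pos (mul_pos (sub_pos.mpr hu) (sub_pos.mpr hv))
      (sub_pos.mpr (by nlinarith : r * m < 1)),
    mul_nonneg (by nlinarith : (0:ℝ) ≤ 1 - m * m) (by linarith : (0:ℝ) ≤ u.re + r),
    mul_nonneg (by nlinarith : (0:ℝ) ≤ 1 - r * r) (by linarith : (0:ℝ) ≤ v.re + m)]

/-- For analytic self-maps `ω₁, ω₂` of the unit disk, any real `θ` and `z` in the disk,
`Re[(1 - ω₁(z) conj(ω₂(z))) / ((1 + e^{-2iθ} ω₁(z))(1 + e^{2iθ} conj(ω₂(z))))] > 0`. -/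
theorem two_dilatation_positivity (ω₁ ω₂ : ℂ → ℂ)
    (hω₁ : DifferentiableOn ℂ ω₁ (Metric.ball 0 1))
    (hω₂ : DifferentiableOn ℂ ω₂ (Metric.ball 0 1))
    (hb₁ : ∀ z ∈ Metric.ball (0 : ℂ) 1, ‖ω₁ z‖ < 1)
    (hb₂ : ∀ z ∈ Metric.ball (0 : ℂ) 1, ‖ω₂ z‖ < 1) :
    ∀ (θ : ℝ), ∀ z ∈ Metric.ball (0 : ℂ) 1,
      0 < ((1 - ω₁ z * (starRingEnd ℂ) (ω₂ z)) /
        ((1 + Complex.exp (-(2 * Complex.I * (θ : ℂ))) * ω₁ z) *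
          (1 + Complex.exp (2 * Complex.I * (θ : ℂ)) * (starRingEnd ℂ) (ω₂ z)))).re := by
  intro θ z hz
  have ha := hb₁ z hz
  have hb := hb₂ z hz
  set e := Complex.exp (-(2 * Complex.I * (θ : ℂ))) with he
  have habs : ‖e‖ = 1 := by
    rw [he, Complex.norm_exp]
    norm_num [Complex.mul_re, Complex.ofReal_re, Complex.ofReal_im]
  have hconj : Complex.exp (2 * Complex.I * (θ : ℂ)) = (starRingEnd ℂ) e := by
    rw [he, ← Complex.exp_conj]
    congr 1
    simp only [map_neg, map_mul, Complex.conj_I, Complex.conj_ofReal, map_ofNat]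
    ring
  have hee : e * (starRingEnd ℂ) e = 1 := by
    rw [Complex.mul_conj, Complex.normSq_eq_norm_sq, habs]
    norm_num
  have key := aux_pos (e * ω₁ z) (e * ω₂ z)
    (by rw [norm_mul, habs, one_mul]; exact ha)
    (by rw [norm_mul, habs, one_mul]; exact hb)
  have heq : (1 - ω₁ z * (starRingEnd ℂ) (ω₂ z)) /
        ((1 + e * ω₁ z) * (1 + (starRingEnd ℂ) e * (starRingEnd ℂ) (ω₂ z)))
      = (1 - (e * ω₁ z) * (starRingEnd ℂ) (e * ω₂ z)) /
        ((1 + e * ω₁ z) * (starRingEnd ℂ) (1 + e * ω₂ z)) := by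
    rw [map_mul, map_add, map_one, map_mul]
    congr 1
    linear_combination (ω₁ z * (starRingEnd ℂ) (ω₂ z)) * hee
  rw [hconj, heq]
  exact key
end

section
/- Let a'₁, a'₂ ∈ (−1,1), and define b₂ = 1 − (a'₁a'₂)², b₀ = ((1 + a'₂)(1 − 3a'₁ + 3a'₁a'₂ − (a'₁)²a'₂))/2. Then b₂² − b₀² = ((1−a'₁)(1−a'₂)/4) · (3 + a'₂ + a'₁a'₂ + 3a'₁(a'₂)²) · (1 + 3a'₁ + 3a'₁a'₂ + (a'₁)²a'₂). In particular, |b₂| > |b₀| if and only if 1 + 3a'₁ + 3a'₁a'₂ + (a'₁)²a'₂ > 0. -/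
/-- The key identity for `b₂² - b₀²` in Case 2 of Theorem `unit3`, together with the
characterization `|b₂| > |b₀| ↔ 1 + 3a₁ + 3a₁a₂ + a₁²a₂ > 0`. -/
theorem b_sq_difference (a₁ a₂ : ℝ) (ha₁ : -1 < a₁ ∧ a₁ < 1) (ha₂ : -1 < a₂ ∧ a₂ < 1) :
    ((1 - (a₁ * a₂) ^ 2) ^ 2 - (((1 + a₂) * (1 - 3 * a₁ + 3 * a₁ * a₂ - a₁ ^ 2 * a₂)) / 2) ^ 2
        = ((1 - a₁) * (1 - a₂) / 4) * (3 + a₂ + a₁ * a₂ + 3 * a₁ * a₂ ^ 2) *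
            (1 + 3 * a₁ + 3 * a₁ * a₂ + a₁ ^ 2 * a₂))
    ∧ (|1 - (a₁ * a₂) ^ 2| > |((1 + a₂) * (1 - 3 * a₁ + 3 * a₁ * a₂ - a₁ ^ 2 * a₂)) / 2|
        ↔ 0 < 1 + 3 * a₁ + 3 * a₁ * a₂ + a₁ ^ 2 * a₂) := by
  obtain ⟨h1, h2⟩ := ha₁
  obtain ⟨h3, h4⟩ := ha₂
  have key : ((1 - (a₁ * a₂) ^ 2) ^ 2
      - (((1 + a₂) * (1 - 3 * a₁ + 3 * a₁ * a₂ - a₁ ^ 2 * a₂)) / 2) ^ 2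
      = ((1 - a₁) * (1 - a₂) / 4) * (3 + a₂ + a₁ * a₂ + 3 * a₁ * a₂ ^ 2) *
          (1 + 3 * a₁ + 3 * a₁ * a₂ + a₁ ^ 2 * a₂)) := by ring
  have hpos : 0 < ((1 - a₁) * (1 - a₂) / 4) * (3 + a₂ + a₁ * a₂ + 3 * a₁ * a₂ ^ 2) := by
    have hq : 0 < 3 + a₂ + a₁ * a₂ + 3 * a₁ * a₂ ^ 2 := by
      nlinarith [mul_nonneg (by linarith : (0:ℝ) ≤ 1 + a₁) (sq_nonneg (3*a₂+1)),
        mul_pos (by linarith : (0:ℝ) < 1 - a₁)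
          (mul_pos (by linarith : (0:ℝ) < 1 - a₂) (by linarith : (0:ℝ) < 1 + a₂))]
    have h14 : (0:ℝ) < 1 - a₁ := by linarith
    have h24 : (0:ℝ) < 1 - a₂ := by linarith
    positivity
  refine ⟨key, ?_⟩
  rw [gt_iff_lt, ← sq_lt_sq]
  constructor
  · intro h
    nlinarith [key, hpos]
  · intro h
    nlinarith [key, mul_pos hpos h]
end

section
/- Let a'₁, a'₂ ∈ (−1,1) and set u = −(1 + 3a'₂ + 3a'₁a'₂ + a'₁(a'₂)²), v = 3 + a'₂ + a'₁a'₂ + 3a'₁(a'₂)². Then u² − v² = −8(1 − (a'₂)²)(1 − (a'₁a'₂)²) < 0; consequently v ≠ 0 and |u/v| < 1, i.e., the point z₀ = u/v lies in the open unit disk. -/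
/-- With `u = -(1 + 3a₂ + 3a₁a₂ + a₁a₂²)` and `v = 3 + a₂ + a₁a₂ + 3a₁a₂²` for
`a₁, a₂ ∈ (-1,1)`, we have `u² - v² = -8(1-a₂²)(1-(a₁a₂)²) < 0`, `v ≠ 0` and `|u/v| < 1`. -/
theorem zero_in_disk (a₁ a₂ : ℝ) (ha₁ : -1 < a₁ ∧ a₁ < 1) (ha₂ : -1 < a₂ ∧ a₂ < 1) :
    ((-(1 + 3 * a₂ + 3 * a₁ * a₂ + a₁ * a₂ ^ 2)) ^ 2
          - (3 + a₂ + a₁ * a₂ + 3 * a₁ * a₂ ^ 2) ^ 2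
        = -8 * (1 - a₂ ^ 2) * (1 - (a₁ * a₂) ^ 2))
    ∧ ((-(1 + 3 * a₂ + 3 * a₁ * a₂ + a₁ * a₂ ^ 2)) ^ 2
          - (3 + a₂ + a₁ * a₂ + 3 * a₁ * a₂ ^ 2) ^ 2 < 0)
    ∧ (3 + a₂ + a₁ * a₂ + 3 * a₁ * a₂ ^ 2 ≠ 0)
    ∧ |(-(1 + 3 * a₂ + 3 * a₁ * a₂ + a₁ * a₂ ^ 2)) /
        (3 + a₂ + a₁ * a₂ + 3 * a₁ * a₂ ^ 2)| < 1 := by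
  obtain ⟨h1, h2⟩ := ha₁
  obtain ⟨h3, h4⟩ := ha₂
  have h5 : a₂ ^ 2 < 1 := by nlinarith
  have h6 : (a₁ * a₂) ^ 2 < 1 := by nlinarith [sq_nonneg (a₁ * a₂), sq_nonneg a₁, sq_nonneg a₂, sq_nonneg (a₁ - a₂), sq_nonneg (a₁ + a₂)]
  have heq : (-(1 + 3 * a₂ + 3 * a₁ * a₂ + a₁ * a₂ ^ 2)) ^ 2
          - (3 + a₂ + a₁ * a₂ + 3 * a₁ * a₂ ^ 2) ^ 2
        = -8 * (1 - a₂ ^ 2) * (1 - (a₁ * a₂) ^ 2) := by ring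
  have hlt : (-(1 + 3 * a₂ + 3 * a₁ * a₂ + a₁ * a₂ ^ 2)) ^ 2
          - (3 + a₂ + a₁ * a₂ + 3 * a₁ * a₂ ^ 2) ^ 2 < 0 := by
    rw [heq]; nlinarith
  have hv : 3 + a₂ + a₁ * a₂ + 3 * a₁ * a₂ ^ 2 ≠ 0 := by
    intro h
    rw [h] at hlt
    nlinarith [sq_nonneg (-(1 + 3 * a₂ + 3 * a₁ * a₂ + a₁ * a₂ ^ 2))]
  refine ⟨heq, hlt, hv, ?_⟩
  rw [abs_div, div_lt_one (abs_pos.mpr hv)]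
  nlinarith [abs_nonneg (-(1 + 3 * a₂ + 3 * a₁ * a₂ + a₁ * a₂ ^ 2)), abs_nonneg (3 + a₂ + a₁ * a₂ + 3 * a₁ * a₂ ^ 2), sq_abs (-(1 + 3 * a₂ + 3 * a₁ * a₂ + a₁ * a₂ ^ 2)), sq_abs (3 + a₂ + a₁ * a₂ + 3 * a₁ * a₂ ^ 2)]
end

section
/- Let ω₁, …, ω_n be analytic self-maps of the unit disk D, let c be a unimodular constant, and let t₁, …, t_n be nonnegative reals summing to 1. Then for every z ∈ D, |Σ_j t_j/(1 + c ω_j(z))|² > |Σ_j t_j ω_j(z)/(1 + c ω_j(z))|². -/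
open Complex Metric

lemma half_lt_re_inv_one_add (w : ℂ) (hw : ‖w‖ < 1) :
    1/2 < ((1 + w)⁻¹).re := by
  have hre : |w.re| < 1 := lt_of_le_of_lt (Complex.abs_re_le_norm w) hw
  have hre' : -1 < w.re := by cases abs_lt.mp hre with | intro h1 h2 => exact h1
  have hns : Complex.normSq w < 1 := by
    have := Complex.sq_norm w
    nlinarith [norm_nonneg w]
  have hnz : Complex.normSq (1 + w) = 1 + 2 * w.re + Complex.normSq w := by
    simp [Complex.normSq_apply, Complex.add_re, Complex.add_im]; ring
  have hpos : 0 < Complex.normSq (1 + w) := by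
    rw [hnz]
    have h2 : Complex.normSq w = w.re^2 + w.im^2 := by
      simp [Complex.normSq_apply]; ring
    nlinarith [sq_nonneg (1 + w.re), sq_nonneg w.im]
  rw [Complex.inv_re, hnz]
  have h1re : (1 + w).re = 1 + w.re := by simp
  rw [h1re]
  rw [div_lt_div_iff₀ (by norm_num) (by rw [hnz] at hpos; exact hpos)] at *
  nlinarith

/-- Positivity of `Φ` for convex combinations: for analytic self-maps `ω_j` of the disk,
unimodular `c` and convex weights `t_j`,
`|Σ t_j/(1 + c ω_j(z))|² > |Σ t_j ω_j(z)/(1 + c ω_j(z))|²` on the disk. -/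
theorem convex_combination_jacobian_positive (n : ℕ) (ω : Fin n → ℂ → ℂ) (c : ℂ)
    (hc : ‖c‖ = 1)
    (hω : ∀ j, DifferentiableOn ℂ (ω j) (Metric.ball 0 1))
    (hωb : ∀ j, ∀ z ∈ Metric.ball (0 : ℂ) 1, ‖ω j z‖ < 1)
    (t : Fin n → ℝ) (ht : ∀ j, 0 ≤ t j) (hts : ∑ j, t j = 1) :
    ∀ z ∈ Metric.ball (0 : ℂ) 1,
      ‖∑ j, (t j : ℂ) / (1 + c * ω j z)‖ ^ 2 >
        ‖∑ j, (t j : ℂ) * ω j z / (1 + c * ω j z)‖ ^ 2 := by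
  intro z hz
  set w : Fin n → ℂ := fun j => c * ω j z with hw
  have hwlt : ∀ j, ‖w j‖ < 1 := by
    intro j
    simp only [hw, norm_mul, hc, one_mul]
    exact hωb j z hz
  have hnz : ∀ j, (1 : ℂ) + w j ≠ 0 := by
    intro j h
    have : ‖w j‖ = 1 := by
      have : w j = -1 := by linear_combination h
      simp [this]
    linarith [hwlt j]
  set A : ℂ := ∑ j, (t j : ℂ) / (1 + w j) with hA
  -- identity : c * B = 1 - A
  have hcB : c * (∑ j, (t j : ℂ) * ω j z / (1 + c * ω j z)) = 1 - A := by
    rw [Finset.mul_sum, hA]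
    have : ∀ j ∈ Finset.univ, c * ((t j : ℂ) * ω j z / (1 + c * ω j z))
        = (t j : ℂ) - (t j : ℂ) / (1 + w j) := by
      intro j _
      have h := hnz j
      simp only [hw] at h ⊢
      field_simp
      ring
    rw [Finset.sum_congr rfl this, Finset.sum_sub_distrib]
    have : (∑ j, ((t j : ℂ))) = 1 := by
      push_cast [← hts]
      norm_cast
    rw [this]
  have habsB : ‖∑ j, (t j : ℂ) * ω j z / (1 + c * ω j z)‖
      = ‖1 - A‖ := by
    rw [← hcB, norm_mul, hc, one_mul]
  have hgoal : ‖∑ j, (t j : ℂ) / (1 + c * ω j z)‖ = ‖A‖ := by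
    rfl
  rw [habsB, hgoal]
  -- reduce to Re A > 1/2
  have hreA : 1/2 < A.re := by
    have hAre : A.re = ∑ j, t j * ((1 + w j)⁻¹).re := by
      rw [hA, Complex.re_sum]
      apply Finset.sum_congr rfl
      intro j _
      rw [div_eq_mul_inv, Complex.re_ofReal_mul]
    have hj0 : ∃ j : Fin n, 0 < t j := by
      by_contra h
      push_neg at h
      have : ∑ j, t j = 0 := Finset.sum_eq_zero fun j _ =>
        le_antisymm (h j) (ht j)
      rw [this] at hts; norm_num at hts
    obtain ⟨j0, hj0⟩ := hj0
    have hlt : ∑ j, t j * (1/2) < ∑ j, t j * ((1 + w j)⁻¹).re := by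
      apply Finset.sum_lt_sum
      · intro j _
        exact mul_le_mul_of_nonneg_left (le_of_lt (half_lt_re_inv_one_add (w j) (hwlt j))) (ht j)
      · exact ⟨j0, Finset.mem_univ j0,
          mul_lt_mul_of_pos_left (half_lt_re_inv_one_add (w j0) (hwlt j0)) hj0⟩
    have := hlt
    rw [← Finset.sum_mul, hts, one_mul] at this
    rw [hAre]; linarith
  rw [show ‖A‖ ^ 2 = Complex.normSq A from (Complex.sq_norm A),
    show ‖1 - A‖ ^ 2 = Complex.normSq (1 - A) from (Complex.sq_norm _)]
  have : Complex.normSq (1 - A) = 1 - 2 * A.re + Complex.normSq A := by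
    simp [Complex.normSq_apply, Complex.sub_re, Complex.sub_im]; ring
  rw [this]
  linarith
end
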